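/- arXiv:2403.01906 — 3 statements merged into one kernel-verified Lean document; each statement's English description precedes it below -/
import Mathlib

section
/- Let I : [0,∞) → ℝ³ be continuous with I₀(t) = 0 for all t ≥ 0. If v is a solution of (EqP) with v₀(0) = 0, then v₀(t) = 0 for all t ≥ 0 (so the output y(t) = v₀(t) is identically null). -/
open MeasureTheory Real Set Filter

/-- The neuronal activity profile `V(r,θ,v) = v₀ + r v₁ cos(2θ) + r v₂ sin(2θ)`. -/
noncomputable def Vact (v : Fin 3 → ℝ) (r θ : ℝ) : ℝ :=
  v 0 + r * v 1 * Real.cos (2 * θ) + r * v 2 * Real.sin (2 * θ)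

/-- The right-hand side `f(v, I(t))` of the reduced neural field equation (EqP). -/
noncomputable def fvec (σ P : ℝ → ℝ) (J0 J1 : ℝ) (It : ℝ × ℝ × ℝ) (v : Fin 3 → ℝ) :
    Fin 3 → ℝ :=
  ![ -v 0 + J0 * (∫ x in (Set.Ici (0:ℝ)) ×ˢ (Set.Ico (-(π/2)) (π/2)),
        σ (Vact v x.1 x.2) * P x.1 / π) + It.1,
     -v 1 + J1 * (∫ x in (Set.Ici (0:ℝ)) ×ˢ (Set.Ico (-(π/2)) (π/2)),
        x.1 * Real.cos (2 * x.2) * σ (Vact v x.1 x.2) * P x.1 / π) + It.2.1,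
     -v 2 + J1 * (∫ x in (Set.Ici (0:ℝ)) ×ˢ (Set.Ico (-(π/2)) (π/2)),
        x.1 * Real.sin (2 * x.2) * σ (Vact v x.1 x.2) * P x.1 / π) + It.2.2 ]

/-- A solution of (EqP) on `[0,∞)`: a `C¹` curve satisfying `v̇(t) = f(v(t), I(t))`. -/
def IsSol (σ P : ℝ → ℝ) (J0 J1 : ℝ) (I : ℝ → ℝ × ℝ × ℝ) (v : ℝ → Fin 3 → ℝ) : Prop :=
  ContDiffOn ℝ 1 v (Set.Ici (0:ℝ)) ∧
  ∀ t ∈ Set.Ici (0:ℝ),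
    HasDerivWithinAt v (fvec σ P J0 J1 (I t) (v t)) (Set.Ici (0:ℝ)) t

lemma theta_symm_aux (σ : ℝ → ℝ) (a b c : ℝ) :
    (∫ θ in Set.Ico (-(π/2)) (π/2), σ (a + b * Real.cos (2*θ) + c * Real.sin (2*θ))) =
    ∫ θ in Set.Ico (-(π/2)) (π/2), σ (a - b * Real.cos (2*θ) - c * Real.sin (2*θ)) := by
  set f : ℝ → ℝ := fun θ => σ (a + b * Real.cos (2*θ) + c * Real.sin (2*θ)) with hf
  have hper : Function.Periodic f π := by
    intro θ
    simp only [hf]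
    rw [show 2 * (θ + π) = 2*θ + 2*π by ring, Real.cos_add_two_pi, Real.sin_add_two_pi]
  have h1 : ∀ θ : ℝ, σ (a - b * Real.cos (2*θ) - c * Real.sin (2*θ)) = f (θ + π/2) := by
    intro θ
    simp only [hf]
    rw [show 2 * (θ + π/2) = 2*θ + π by ring, Real.cos_add_pi, Real.sin_add_pi]
    ring_nf
  have hAB : -(π/2) ≤ π/2 := by linarith [Real.pi_pos]
  have hico : ∀ g : ℝ → ℝ, (∫ θ in Set.Ico (-(π/2)) (π/2), g θ) = ∫ θ in (-(π/2))..(π/2), g θ := by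
    intro g
    rw [intervalIntegral.integral_of_le hAB, setIntegral_congr_set Ico_ae_eq_Ioc]
  rw [hico, hico]
  calc (∫ θ in (-(π/2))..(π/2), σ (a + b * Real.cos (2*θ) + c * Real.sin (2*θ)))
      = ∫ θ in (-(π/2))..(-(π/2) + π), f θ := by
        rw [show -(π/2) + π = π/2 by ring]
    _ = ∫ θ in (0:ℝ)..(0 + π), f θ := hper.intervalIntegral_add_eq _ _
    _ = ∫ θ in (-(π/2) + π/2)..(π/2 + π/2), f θ := by
        rw [show -(π/2) + π/2 = (0:ℝ) by ring, show π/2 + π/2 = (0:ℝ) + π by ring]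
    _ = ∫ θ in (-(π/2))..(π/2), f (θ + π/2) := (intervalIntegral.integral_comp_add_right f (π/2)).symm
    _ = ∫ θ in (-(π/2))..(π/2), σ (a - b * Real.cos (2*θ) - c * Real.sin (2*θ)) := by
        apply intervalIntegral.integral_congr
        intro θ _
        exact (h1 θ).symm

lemma key_estimate (σ P : ℝ → ℝ)
    (hlip : ∀ x y : ℝ, |σ x - σ y| ≤ deriv σ 0 * |x - y|)
    (hodd : ∀ x, σ (-x) = -σ x)
    (habs : ∀ x, |σ x| ≤ 1)
    (hσc : Continuous σ)
    (hP0 : ∀ r, 0 ≤ P r)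
    (hPii : IntegrableOn P (Set.Ici (0:ℝ)))
    (hPint : ∫ r in Set.Ici (0:ℝ), P r = 1)
    (w : Fin 3 → ℝ) :
    |∫ z in (Set.Ici (0:ℝ)) ×ˢ (Set.Ico (-(π/2)) (π/2)),
        σ (Vact w z.1 z.2) * P z.1 / π| ≤ deriv σ 0 * |w 0| := by
  have hπ : (0:ℝ) < π := Real.pi_pos
  have hrestrict : (volume : Measure (ℝ × ℝ)).restrict
        ((Set.Ici (0:ℝ)) ×ˢ (Set.Ico (-(π/2)) (π/2))) =
      (volume.restrict (Set.Ici (0:ℝ))).prod (volume.restrict (Set.Ico (-(π/2)) (π/2))) := by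
    rw [Measure.volume_eq_prod, Measure.prod_restrict]
  have hPm : AEStronglyMeasurable P (volume.restrict (Set.Ici (0:ℝ))) := hPii.aestronglyMeasurable
  have hPfst : AEStronglyMeasurable (fun z : ℝ × ℝ => P z.1)
      ((volume : Measure (ℝ × ℝ)).restrict ((Set.Ici (0:ℝ)) ×ˢ (Set.Ico (-(π/2)) (π/2)))) := by
    rw [hrestrict]; exact hPm.comp_fst
  have hBfin : volume (Set.Ico (-(π/2)) (π/2)) < ⊤ := by
    rw [Real.volume_Ico]; exact ENNReal.ofReal_lt_top
  have hPBi : ∀ c : ℝ, Integrable (fun z : ℝ × ℝ => P z.1 * c)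
      ((volume : Measure (ℝ × ℝ)).restrict ((Set.Ici (0:ℝ)) ×ˢ (Set.Ico (-(π/2)) (π/2)))) := by
    intro c
    rw [hrestrict]
    exact Integrable.mul_prod hPii (integrableOn_const hBfin.ne)
  set F : ℝ × ℝ → ℝ := fun z => σ (Vact w z.1 z.2) * P z.1 / π with hF
  set G : ℝ × ℝ → ℝ := fun z =>
    σ (w 0 - z.1 * w 1 * Real.cos (2 * z.2) - z.1 * w 2 * Real.sin (2 * z.2)) * P z.1 / π with hG
  have hFc : Continuous fun z : ℝ × ℝ => σ (Vact w z.1 z.2) := by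
    apply hσc.comp
    unfold Vact
    fun_prop
  have hGc : Continuous fun z : ℝ × ℝ =>
      σ (w 0 - z.1 * w 1 * Real.cos (2 * z.2) - z.1 * w 2 * Real.sin (2 * z.2)) := by
    apply hσc.comp
    fun_prop
  have hint : ∀ (φ : ℝ × ℝ → ℝ), Continuous φ → (∀ z, |φ z| ≤ 1) →
      IntegrableOn (fun z : ℝ × ℝ => φ z * P z.1 / π)
        ((Set.Ici (0:ℝ)) ×ˢ (Set.Ico (-(π/2)) (π/2))) := by
    intro φ hc hb
    apply Integrable.mono' (g := fun z : ℝ × ℝ => P z.1 * (1/π)) (hPBi (1/π))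
    · simp only [div_eq_mul_inv]
      exact (hc.aestronglyMeasurable.mul hPfst).mul_const π⁻¹
    · refine Filter.Eventually.of_forall fun z => ?_
      have e1 : |φ z * P z.1 / π| = |φ z| * P z.1 / π := by
        rw [abs_div, abs_mul, abs_of_nonneg (hP0 _), abs_of_pos hπ]
      rw [Real.norm_eq_abs, e1, show P z.1 * (1/π) = 1 * P z.1 / π by ring]
      apply (div_le_div_iff_of_pos_right hπ).2
      exact mul_le_mul_of_nonneg_right (hb z) (hP0 _)
  have hFi : IntegrableOn F ((Set.Ici (0:ℝ)) ×ˢ (Set.Ico (-(π/2)) (π/2))) :=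
    hint _ hFc (fun z => habs _)
  have hGi : IntegrableOn G ((Set.Ici (0:ℝ)) ×ˢ (Set.Ico (-(π/2)) (π/2))) :=
    hint _ hGc (fun z => habs _)
  have hFG : (∫ z in (Set.Ici (0:ℝ)) ×ˢ (Set.Ico (-(π/2)) (π/2)), F z) =
      ∫ z in (Set.Ici (0:ℝ)) ×ˢ (Set.Ico (-(π/2)) (π/2)), G z := by
    rw [Measure.volume_eq_prod] at hFi hGi ⊢
    rw [setIntegral_prod _ hFi, setIntegral_prod _ hGi]
    apply integral_congr_ae
    filter_upwards with r
    simp only [hF, hG]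
    simp_rw [mul_div_assoc]
    rw [integral_mul_const, integral_mul_const]
    congr 1
    have : ∀ θ : ℝ, Vact w r θ = w 0 + (r * w 1) * Real.cos (2*θ) + (r * w 2) * Real.sin (2*θ) := by
      intro θ; unfold Vact; ring
    simp_rw [this]
    exact theta_symm_aux σ (w 0) (r * w 1) (r * w 2)
  have hhalf : (∫ z in (Set.Ici (0:ℝ)) ×ˢ (Set.Ico (-(π/2)) (π/2)), (F z + G z)/2) =
      ∫ z in (Set.Ici (0:ℝ)) ×ˢ (Set.Ico (-(π/2)) (π/2)), F z := by
    calc (∫ z in (Set.Ici (0:ℝ)) ×ˢ (Set.Ico (-(π/2)) (π/2)), (F z + G z)/2)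
        = (∫ z in (Set.Ici (0:ℝ)) ×ˢ (Set.Ico (-(π/2)) (π/2)), (F z + G z)) * (2:ℝ)⁻¹ := by
          simp_rw [div_eq_mul_inv]
          exact integral_mul_const _ _
      _ = ((∫ z in (Set.Ici (0:ℝ)) ×ˢ (Set.Ico (-(π/2)) (π/2)), F z) +
            ∫ z in (Set.Ici (0:ℝ)) ×ˢ (Set.Ico (-(π/2)) (π/2)), G z) * (2:ℝ)⁻¹ := by
          rw [integral_add hFi hGi]
      _ = ∫ z in (Set.Ici (0:ℝ)) ×ˢ (Set.Ico (-(π/2)) (π/2)), F z := by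
          rw [← hFG]; ring
  have hnorm : ∀ z : ℝ × ℝ, ‖(F z + G z)/2‖ ≤ P z.1 * (deriv σ 0 * |w 0| / π) := by
    intro z
    set W : ℝ := z.1 * w 1 * Real.cos (2*z.2) + z.1 * w 2 * Real.sin (2*z.2) with hW
    have hargF : Vact w z.1 z.2 = w 0 + W := by unfold Vact; rw [hW]; ring
    have hargG : w 0 - z.1 * w 1 * Real.cos (2*z.2) - z.1 * w 2 * Real.sin (2*z.2) = w 0 - W := by
      rw [hW]; ring
    have hGodd : σ (w 0 - W) = -σ (W - w 0) := by
      rw [show w 0 - W = -(W - w 0) by ring, hodd]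
    have e : (F z + G z)/2 = (σ (w 0 + W) - σ (W - w 0)) * P z.1 / π / 2 := by
      simp only [hF, hG, hargF, hargG, hGodd]
      ring
    have h1 : |σ (w 0 + W) - σ (W - w 0)| ≤ deriv σ 0 * (2 * |w 0|) := by
      have h2 := hlip (w 0 + W) (W - w 0)
      rw [show w 0 + W - (W - w 0) = 2 * w 0 by ring, abs_mul, abs_two] at h2
      exact h2
    rw [Real.norm_eq_abs, e]
    have e2 : |(σ (w 0 + W) - σ (W - w 0)) * P z.1 / π / 2| =
        |σ (w 0 + W) - σ (W - w 0)| * P z.1 / π / 2 := by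
      rw [abs_div, abs_div, abs_mul, abs_of_nonneg (hP0 _), abs_of_pos hπ, abs_two]
    rw [e2, show P z.1 * (deriv σ 0 * |w 0| / π) = deriv σ 0 * (2 * |w 0|) * P z.1 / π / 2 by ring]
    apply (div_le_div_iff_of_pos_right two_pos).2
    apply (div_le_div_iff_of_pos_right hπ).2
    exact mul_le_mul_of_nonneg_right h1 (hP0 _)
  have hsum : (∫ z in (Set.Ici (0:ℝ)) ×ˢ (Set.Ico (-(π/2)) (π/2)),
      P z.1 * (deriv σ 0 * |w 0| / π)) = deriv σ 0 * |w 0| := by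
    rw [Measure.volume_eq_prod]
    rw [setIntegral_prod_mul P (fun _ : ℝ => deriv σ 0 * |w 0| / π)]
    rw [hPint, setIntegral_const, measureReal_def, Real.volume_Ico, smul_eq_mul,
      show π/2 - -(π/2) = π by ring, ENNReal.toReal_ofReal hπ.le]
    field_simp
  calc |∫ z in (Set.Ici (0:ℝ)) ×ˢ (Set.Ico (-(π/2)) (π/2)), F z|
      = ‖∫ z in (Set.Ici (0:ℝ)) ×ˢ (Set.Ico (-(π/2)) (π/2)), (F z + G z)/2‖ := by
        rw [hhalf, Real.norm_eq_abs]
    _ ≤ ∫ z in (Set.Ici (0:ℝ)) ×ˢ (Set.Ico (-(π/2)) (π/2)),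
          P z.1 * (deriv σ 0 * |w 0| / π) :=
        norm_integral_le_of_norm_le (hPBi _) (Filter.Eventually.of_forall hnorm)
    _ = deriv σ 0 * |w 0| := hsum

/-- if `I₀ ≡ 0` and `v` is a solution of (EqP) with `v₀(0) = 0`, then
the output `y(t) = v₀(t)` is identically zero on `[0,∞)`. -/
theorem output_null_on_Z0
    (σ P : ℝ → ℝ) (J0 J1 : ℝ) (hJ0 : J0 ≠ 0) (hJ1 : 0 < J1)
    (I : ℝ → ℝ × ℝ × ℝ) (hI : Continuous I) (hI0 : ∀ t : ℝ, 0 ≤ t → (I t).1 = 0)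
    (hσ : ContDiff ℝ (⊤ : ℕ∞) σ)
    (hodd : ∀ x, σ (-x) = -σ x)
    (hpos : ∀ x, 0 < deriv σ x)
    (hcc : ∀ x, x * iteratedDeriv 2 σ x ≤ 0)
    (hσ0 : σ 0 = 0)
    (hbot : Tendsto σ atBot (nhds (-1)))
    (htop : Tendsto σ atTop (nhds 1))
    (hmax : ∀ x, deriv σ x ≤ deriv σ 0)
    (hP0 : ∀ r, 0 ≤ P r)
    (hPsupp : HasCompactSupport P)
    (hPint : ∫ r in Set.Ici (0:ℝ), P r = 1)
    (v : ℝ → Fin 3 → ℝ) (hv : IsSol σ P J0 J1 I v) (hinit : v 0 0 = 0) :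
    ∀ t : ℝ, 0 ≤ t → v t 0 = 0 := by
  have hdiff : Differentiable ℝ σ := hσ.differentiable (by simp)
  have hL : 0 < deriv σ 0 := hpos 0
  -- Lipschitz estimate with constant `deriv σ 0`
  have hlip : ∀ x y : ℝ, |σ x - σ y| ≤ deriv σ 0 * |x - y| := by
    have h : LipschitzWith (deriv σ 0).toNNReal σ := by
      apply lipschitzWith_of_nnnorm_deriv_le hdiff
      intro x
      rw [← NNReal.coe_le_coe, coe_nnnorm, Real.norm_eq_abs,
        Real.coe_toNNReal _ hL.le, abs_of_pos (hpos x)]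
      exact hmax x
    intro x y
    have h2 := h.dist_le_mul x y
    rwa [Real.dist_eq, Real.dist_eq, Real.coe_toNNReal _ hL.le] at h2
  -- boundedness of σ
  have hmono : StrictMono σ := strictMono_of_deriv_pos hpos
  have habs : ∀ x, |σ x| ≤ 1 := by
    intro x
    rw [abs_le]
    constructor
    · exact le_of_tendsto hbot (eventually_atBot.2 ⟨x, fun y hy => hmono.monotone hy⟩)
    · exact ge_of_tendsto htop (eventually_atTop.2 ⟨x, fun y hy => hmono.monotone hy⟩)
  -- integrability of P
  have hPii : IntegrableOn P (Set.Ici (0:ℝ)) := by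
    by_contra h
    rw [MeasureTheory.integral_undef h] at hPint
    exact one_ne_zero hPint.symm
  have key := key_estimate σ P hlip hodd habs hσ.continuous hP0 hPii hPint
  -- the first component of the solution
  have hgc : ContinuousOn (fun t => v t 0) (Set.Ici (0:ℝ)) :=
    (continuous_apply (0 : Fin 3)).comp_continuousOn hv.1.continuousOn
  intro t ht
  have hgron := norm_le_gronwallBound_of_norm_deriv_right_le
    (f := fun t => v t 0) (f' := fun x => fvec σ P J0 J1 (I x) (v x) 0)
    (δ := 0) (K := 1 + |J0| * deriv σ 0) (ε := 0) (a := 0) (b := t)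
    (hgc.mono Icc_subset_Ici_self)
    (fun x hx => ((hasDerivWithinAt_pi.1 (hv.2 x hx.1)) 0).mono (Ici_subset_Ici.2 hx.1))
    (by show ‖v 0 0‖ ≤ 0; rw [hinit]; simp)
    ?_ t ⟨ht, le_rfl⟩
  · have h0 : ‖v t 0‖ ≤ 0 := by simpa [gronwallBound_ε0] using hgron
    exact norm_le_zero_iff.1 h0
  · intro x hx
    show ‖fvec σ P J0 J1 (I x) (v x) 0‖ ≤ (1 + |J0| * deriv σ 0) * ‖v x 0‖ + 0
    have hf0 : fvec σ P J0 J1 (I x) (v x) 0 =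
        -(v x 0) + J0 * (∫ z in (Set.Ici (0:ℝ)) ×ˢ (Set.Ico (-(π/2)) (π/2)),
          σ (Vact (v x) z.1 z.2) * P z.1 / π) := by
      simp [fvec, hI0 x hx.1]
    rw [hf0, Real.norm_eq_abs]
    calc |-(v x 0) + J0 * (∫ z in (Set.Ici (0:ℝ)) ×ˢ (Set.Ico (-(π/2)) (π/2)),
            σ (Vact (v x) z.1 z.2) * P z.1 / π)|
        ≤ |v x 0| + |J0| * |∫ z in (Set.Ici (0:ℝ)) ×ˢ (Set.Ico (-(π/2)) (π/2)),
            σ (Vact (v x) z.1 z.2) * P z.1 / π| := by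
          refine (abs_add_le _ _).trans ?_
          rw [abs_neg, abs_mul]
      _ ≤ |v x 0| + |J0| * (deriv σ 0 * |v x 0|) := by
          have := key (v x)
          have h3 := mul_le_mul_of_nonneg_left this (abs_nonneg J0)
          linarith
      _ = (1 + |J0| * deriv σ 0) * ‖v x 0‖ + 0 := by
          rw [Real.norm_eq_abs]; ring
end

section
/- Let I : [0,∞) → ℝ³ be continuous with I₀(t) ≥ c > 0 for all t ≥ 0, and let v be a solution of (EqP). Then for all t ≥ 0, v̇₀(t) ≥ −(1 + |J₀| σ'(0)) |v₀(t)| + c. In particular, setting δ* = c / (1 + |J₀| σ'(0)), one has v̇₀(t) > 0 at every time t with |v₀(t)| < δ*. -/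
open MeasureTheory Real Set Filter

lemma sigma_lip {σ : ℝ → ℝ} (hσ : ContDiff ℝ (⊤ : ℕ∞) σ) (hpos : ∀ x, 0 < deriv σ x)
    (hmax : ∀ x, deriv σ x ≤ deriv σ 0) (a b : ℝ) :
    |σ a - σ b| ≤ deriv σ 0 * |a - b| := by
  have hdiff : Differentiable ℝ σ := hσ.differentiable (by simp)
  have hd : ∀ x ∈ (Set.univ : Set ℝ), DifferentiableAt ℝ σ x := fun x _ => hdiff x
  have hb : ∀ x ∈ (Set.univ : Set ℝ), ‖deriv σ x‖ ≤ deriv σ 0 := fun x _ => by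
    rw [Real.norm_eq_abs, abs_of_pos (hpos x)]; exact hmax x
  simpa [Real.norm_eq_abs] using
    Convex.norm_image_sub_le_of_norm_deriv_le hd hb convex_univ (Set.mem_univ b) (Set.mem_univ a)

lemma sigma_bdd {σ : ℝ → ℝ} (hpos : ∀ x, 0 < deriv σ x)
    (hbot : Tendsto σ atBot (nhds (-1))) (htop : Tendsto σ atTop (nhds 1)) (x : ℝ) :
    |σ x| ≤ 1 := by
  have hmono : StrictMono σ := strictMono_of_deriv_pos hpos
  rw [abs_le]
  constructor
  · exact le_of_tendsto hbot (eventually_atBot.2 ⟨x, fun y hy => hmono.le_iff_le.2 hy⟩)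
  · exact ge_of_tendsto htop (eventually_atTop.2 ⟨x, fun y hy => hmono.le_iff_le.2 hy⟩)

lemma P_integrable {P : ℝ → ℝ} (hPint : ∫ r in Set.Ici (0:ℝ), P r = 1) :
    IntegrableOn P (Set.Ici (0:ℝ)) := by
  by_contra h
  rw [MeasureTheory.integral_undef h] at hPint
  norm_num at hPint

lemma intOn {P : ℝ → ℝ} (hP : IntegrableOn P (Set.Ici (0:ℝ))) (hP0 : ∀ r, 0 ≤ P r)
    (F : ℝ × ℝ → ℝ) (hF : Continuous F) (M : ℝ) (hM : ∀ z, |F z| ≤ M) :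
    IntegrableOn (fun z : ℝ × ℝ => F z * P z.1 / π)
      ((Set.Ici (0:ℝ)) ×ˢ (Set.Ico (-(π/2)) (π/2))) := by
  haveI : IsFiniteMeasure (volume.restrict (Set.Ico (-(π/2)) (π/2))) :=
    ⟨by rw [Measure.restrict_apply_univ]; exact measure_Ico_lt_top⟩
  rw [IntegrableOn, Measure.volume_eq_prod, ← Measure.prod_restrict]
  have dom : Integrable (fun z : ℝ × ℝ => P z.1 * (1/π))
      ((volume.restrict (Set.Ici (0:ℝ))).prod (volume.restrict (Set.Ico (-(π/2)) (π/2)))) :=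
    hP.mul_prod (integrable_const _)
  apply (dom.const_mul M).mono'
  · have h := (hF.aestronglyMeasurable.mul
      (hP.aestronglyMeasurable.comp_fst (ν := volume.restrict (Set.Ico (-(π/2)) (π/2))))).mul
      (aestronglyMeasurable_const (b := π⁻¹))
    simpa [div_eq_mul_inv, Pi.mul_def] using h
  · filter_upwards with z
    have h1 : |F z * P z.1 / π| = |F z| * (P z.1 * (1/π)) := by
      rw [abs_div, abs_mul, abs_of_nonneg (hP0 z.1), abs_of_pos Real.pi_pos]
      ring
    rw [Real.norm_eq_abs, h1]
    have hFz : 0 ≤ |F z| := abs_nonneg _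
    have : 0 ≤ P z.1 * (1/π) := mul_nonneg (hP0 _) (by positivity)
    nlinarith [hM z]

lemma mass_one {P : ℝ → ℝ} (hPint : ∫ r in Set.Ici (0:ℝ), P r = 1) :
    ∫ z in ((Set.Ici (0:ℝ)) ×ˢ (Set.Ico (-(π/2)) (π/2))), P z.1 * (1/π) = 1 := by
  rw [Measure.volume_eq_prod]
  have h := setIntegral_prod_mul (μ := volume) (ν := volume) P (fun _ : ℝ => 1/π)
    (Set.Ici (0:ℝ)) (Set.Ico (-(π/2)) (π/2))
  rw [h, hPint, setIntegral_const, Real.volume_real_Ico,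
    show (π/2 - -(π/2)) = π by ring, max_eq_left Real.pi_pos.le, smul_eq_mul]
  field_simp

lemma sym_zero {σ P : ℝ → ℝ} (hodd : ∀ x, σ (-x) = -σ x) (a b : ℝ)
    (hint : IntegrableOn (fun z : ℝ × ℝ =>
        σ (z.1 * a * Real.cos (2*z.2) + z.1 * b * Real.sin (2*z.2)) * P z.1 / π)
      ((Set.Ici (0:ℝ)) ×ˢ (Set.Ico (-(π/2)) (π/2)))) :
    ∫ z in ((Set.Ici (0:ℝ)) ×ˢ (Set.Ico (-(π/2)) (π/2))),
      σ (z.1 * a * Real.cos (2*z.2) + z.1 * b * Real.sin (2*z.2)) * P z.1 / π = 0 := by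
  set g : ℝ × ℝ → ℝ := fun z =>
    σ (z.1 * a * Real.cos (2*z.2) + z.1 * b * Real.sin (2*z.2)) * P z.1 / π with hg
  set S1 : Set (ℝ × ℝ) := (Set.Ici (0:ℝ)) ×ˢ (Set.Ico (-(π/2)) 0) with hS1
  set S2 : Set (ℝ × ℝ) := (Set.Ici (0:ℝ)) ×ˢ (Set.Ico (0:ℝ) (π/2)) with hS2
  have hS : (Set.Ici (0:ℝ)) ×ˢ (Set.Ico (-(π/2)) (π/2)) = S1 ∪ S2 := by
    rw [hS1, hS2, ← Set.prod_union,
      Set.Ico_union_Ico_eq_Ico (by linarith [Real.pi_pos]) (by linarith [Real.pi_pos])]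
  have hdisj : Disjoint S1 S2 :=
    Set.disjoint_left.2 (fun z h1 h2 => absurd h2.2.1 (not_le.2 h1.2.2))
  have hmeas : MeasurableSet S2 := measurableSet_Ici.prod measurableSet_Ico
  have hi1 : IntegrableOn g S1 := hint.mono_set (hS ▸ Set.subset_union_left)
  have hi2 : IntegrableOn g S2 := hint.mono_set (hS ▸ Set.subset_union_right)
  rw [hS, setIntegral_union hdisj hmeas hi1 hi2]
  set c : ℝ × ℝ := ((0:ℝ), π/2) with hc
  have hmp : MeasurePreserving (fun z : ℝ × ℝ => z + c) volume volume :=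
    measurePreserving_add_right volume c
  have hemb : MeasurableEmbedding (fun z : ℝ × ℝ => z + c) :=
    (MeasurableEquiv.addRight c).measurableEmbedding
  have himg : (fun z : ℝ × ℝ => z + c) '' S1 = S2 := by
    ext ⟨r, θ⟩
    constructor
    · rintro ⟨⟨r', θ'⟩, ⟨hr', hθ'⟩, heq⟩
      have h1 : r' + 0 = r ∧ θ' + π/2 = θ := Prod.mk.injEq .. ▸ (by
        simpa [hc, Prod.ext_iff] using heq)
      refine ⟨by simpa [← h1.1] using hr', ?_, ?_⟩
      · simp only [← h1.2]; linarith [hθ'.1]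
      · simp only [← h1.2]; linarith [hθ'.2]
    · rintro ⟨hr, hθ⟩
      exact ⟨(r, θ - π/2), ⟨hr, by constructor <;> [linarith [hθ.1]; linarith [hθ.2]]⟩,
        by simp [hc, Prod.ext_iff]⟩
  have hkey : ∫ z in S2, g z = ∫ z in S1, g (z + c) := by
    rw [← himg]; exact hmp.setIntegral_image_emb hemb g S1
  have hneg : ∀ z : ℝ × ℝ, g (z + c) = -g z := by
    intro ⟨r, θ⟩
    simp only [hg, hc, Prod.fst_add, Prod.snd_add, add_zero]
    have h2 : 2 * (θ + π/2) = 2*θ + π := by ring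
    rw [h2, Real.cos_add_pi, Real.sin_add_pi]
    rw [show r * a * -Real.cos (2*θ) + r * b * -Real.sin (2*θ)
        = -(r * a * Real.cos (2*θ) + r * b * Real.sin (2*θ)) by ring, hodd]
    ring
  rw [hkey, show (fun z => g (z + c)) = fun z => -g z from funext hneg]
  rw [integral_neg]
  ring

lemma int_bound {σ P : ℝ → ℝ} (hσ : ContDiff ℝ (⊤ : ℕ∞) σ)
    (hodd : ∀ x, σ (-x) = -σ x) (hpos : ∀ x, 0 < deriv σ x)
    (hmax : ∀ x, deriv σ x ≤ deriv σ 0)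
    (hbot : Tendsto σ atBot (nhds (-1))) (htop : Tendsto σ atTop (nhds 1))
    (hP0 : ∀ r, 0 ≤ P r) (hPint : ∫ r in Set.Ici (0:ℝ), P r = 1) (v : Fin 3 → ℝ) :
    |∫ x in (Set.Ici (0:ℝ)) ×ˢ (Set.Ico (-(π/2)) (π/2)),
        σ (Vact v x.1 x.2) * P x.1 / π| ≤ deriv σ 0 * |v 0| := by
  have hP := P_integrable hPint
  set C : ℝ := deriv σ 0 * |v 0| with hC
  have hC0 : 0 ≤ C := mul_nonneg (hpos 0).le (abs_nonneg _)
  set F1 : ℝ × ℝ → ℝ := fun z => σ (Vact v z.1 z.2) with hF1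
  set F2 : ℝ × ℝ → ℝ := fun z =>
    σ (z.1 * v 1 * Real.cos (2*z.2) + z.1 * v 2 * Real.sin (2*z.2)) with hF2
  have hσc : Continuous σ := hσ.continuous
  have hc1 : Continuous F1 := by
    apply hσc.comp
    unfold Vact
    fun_prop
  have hc2 : Continuous F2 := by
    apply hσc.comp
    fun_prop
  have hI1 : IntegrableOn (fun z : ℝ × ℝ => F1 z * P z.1 / π)
      ((Set.Ici (0:ℝ)) ×ˢ (Set.Ico (-(π/2)) (π/2))) :=
    intOn hP hP0 F1 hc1 1 (fun z => sigma_bdd hpos hbot htop _)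
  have hI2 : IntegrableOn (fun z : ℝ × ℝ => F2 z * P z.1 / π)
      ((Set.Ici (0:ℝ)) ×ˢ (Set.Ico (-(π/2)) (π/2))) :=
    intOn hP hP0 F2 hc2 1 (fun z => sigma_bdd hpos hbot htop _)
  have hdiffbd : ∀ z : ℝ × ℝ, |F1 z - F2 z| ≤ C := by
    intro z
    have h := sigma_lip hσ hpos hmax (Vact v z.1 z.2)
      (z.1 * v 1 * Real.cos (2*z.2) + z.1 * v 2 * Real.sin (2*z.2))
    have hv : Vact v z.1 z.2 -
        (z.1 * v 1 * Real.cos (2*z.2) + z.1 * v 2 * Real.sin (2*z.2)) = v 0 := by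
      unfold Vact; ring
    rw [hv] at h
    exact h
  have hIdiff : IntegrableOn (fun z : ℝ × ℝ => (F1 z - F2 z) * P z.1 / π)
      ((Set.Ici (0:ℝ)) ×ˢ (Set.Ico (-(π/2)) (π/2))) :=
    intOn hP hP0 (fun z => F1 z - F2 z) (hc1.sub hc2) C hdiffbd
  have hIC : IntegrableOn (fun z : ℝ × ℝ => C * P z.1 / π)
      ((Set.Ici (0:ℝ)) ×ˢ (Set.Ico (-(π/2)) (π/2))) :=
    intOn hP hP0 (fun _ => C) continuous_const C (fun _ => by rw [abs_of_nonneg hC0])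
  have hsplit : ∫ x in (Set.Ici (0:ℝ)) ×ˢ (Set.Ico (-(π/2)) (π/2)),
      σ (Vact v x.1 x.2) * P x.1 / π
      = (∫ z in (Set.Ici (0:ℝ)) ×ˢ (Set.Ico (-(π/2)) (π/2)), (F1 z - F2 z) * P z.1 / π)
        + ∫ z in (Set.Ici (0:ℝ)) ×ˢ (Set.Ico (-(π/2)) (π/2)), F2 z * P z.1 / π := by
    rw [← integral_add hIdiff hI2]
    refine integral_congr_ae (Eventually.of_forall fun z => ?_)
    simp only [Pi.add_apply]
    ring
  have hzero : ∫ z in (Set.Ici (0:ℝ)) ×ˢ (Set.Ico (-(π/2)) (π/2)), F2 z * P z.1 / π = 0 :=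
    sym_zero hodd (v 1) (v 2) hI2
  rw [hsplit, hzero, add_zero]
  calc |∫ z in (Set.Ici (0:ℝ)) ×ˢ (Set.Ico (-(π/2)) (π/2)), (F1 z - F2 z) * P z.1 / π|
      ≤ ∫ z in (Set.Ici (0:ℝ)) ×ˢ (Set.Ico (-(π/2)) (π/2)), C * P z.1 / π := by
        rw [← Real.norm_eq_abs]
        refine norm_integral_le_of_norm_le hIC (Eventually.of_forall fun z => ?_)
        rw [Real.norm_eq_abs, abs_div, abs_mul, abs_of_pos Real.pi_pos,
          abs_of_nonneg (hP0 z.1)]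
        have h2 : 0 ≤ P z.1 / π := div_nonneg (hP0 z.1) Real.pi_pos.le
        rw [div_le_div_iff_of_pos_right Real.pi_pos] -- maybe wrong name
        exact mul_le_mul_of_nonneg_right (hdiffbd z) (hP0 z.1)
    _ = C := by
        have : (fun z : ℝ × ℝ => C * P z.1 / π) = fun z => C * (P z.1 * (1/π)) := by
          funext z; ring
        rw [this, integral_const_mul, mass_one hPint, mul_one]

/-- if `I₀(t) ≥ c > 0`, every solution satisfies
`v̇₀(t) ≥ −(1 + |J₀| σ'(0)) |v₀(t)| + c`; in particular `v̇₀(t) > 0` whenever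
`|v₀(t)| < δ* = c/(1 + |J₀| σ'(0))`.  (Recall `v̇₀(t) = f₀(v(t), I(t))`.) -/
theorem v0_derivative_lower_bound
    (σ P : ℝ → ℝ) (J0 J1 : ℝ) (hJ0 : J0 ≠ 0) (hJ1 : 0 < J1)
    (I : ℝ → ℝ × ℝ × ℝ) (hI : Continuous I)
    (c : ℝ) (hc : 0 < c) (hI0 : ∀ t : ℝ, 0 ≤ t → c ≤ (I t).1)
    (hσ : ContDiff ℝ (⊤ : ℕ∞) σ)
    (hodd : ∀ x, σ (-x) = -σ x)
    (hpos : ∀ x, 0 < deriv σ x)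
    (hcc : ∀ x, x * iteratedDeriv 2 σ x ≤ 0)
    (hσ0 : σ 0 = 0)
    (hbot : Tendsto σ atBot (nhds (-1)))
    (htop : Tendsto σ atTop (nhds 1))
    (hmax : ∀ x, deriv σ x ≤ deriv σ 0)
    (hP0 : ∀ r, 0 ≤ P r)
    (hPsupp : HasCompactSupport P)
    (hPint : ∫ r in Set.Ici (0:ℝ), P r = 1)
    (v : ℝ → Fin 3 → ℝ) (hv : IsSol σ P J0 J1 I v) :
    ∀ t : ℝ, 0 ≤ t →
      (-(1 + |J0| * deriv σ 0) * |v t 0| + c ≤ fvec σ P J0 J1 (I t) (v t) 0) ∧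
      (|v t 0| < c / (1 + |J0| * deriv σ 0) → 0 < fvec σ P J0 J1 (I t) (v t) 0) := by

  intro t ht
  have hb := int_bound hσ hodd hpos hmax hbot htop hP0 hPint (v t)
  set Int := ∫ x in (Set.Ici (0:ℝ)) ×ˢ (Set.Ico (-(π/2)) (π/2)),
    σ (Vact (v t) x.1 x.2) * P x.1 / π with hInt
  have h0 : fvec σ P J0 J1 (I t) (v t) 0 = -(v t 0) + J0 * Int + (I t).1 := by
    simp [fvec, hInt]
  have habs : |J0 * Int| ≤ |J0| * (deriv σ 0 * |v t 0|) := by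
    rw [abs_mul]
    exact mul_le_mul_of_nonneg_left hb (abs_nonneg _)
  have hJ : -(|J0| * (deriv σ 0 * |v t 0|)) ≤ J0 * Int := (abs_le.1 habs).1
  have hv0 : -|v t 0| ≤ -(v t 0) := neg_le_neg (le_abs_self _)
  have hc' := hI0 t ht
  have hmain : -(1 + |J0| * deriv σ 0) * |v t 0| + c ≤ fvec σ P J0 J1 (I t) (v t) 0 := by
    rw [h0]
    have hiden : -(1 + |J0| * deriv σ 0) * |v t 0|
        = -|v t 0| + -(|J0| * (deriv σ 0 * |v t 0|)) := by ring
    linarith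
  refine ⟨hmain, fun hlt => ?_⟩
  have hK0 : 0 ≤ |J0| * deriv σ 0 := mul_nonneg (abs_nonneg _) (hpos 0).le
  have hKpos : 0 < 1 + |J0| * deriv σ 0 := by linarith
  have h2 : |v t 0| * (1 + |J0| * deriv σ 0) < c := (lt_div_iff₀ hKpos).1 hlt
  nlinarith [hmain]
end

section
/- Let I : [0,∞) → ℝ³ be continuous with I₀(t) ≥ c > 0 for all t ≥ 0, let v be a solution of (EqP), set δ* = c / (1 + |J₀| σ'(0)) and fix δ with 0 < δ < δ*. Then: (a) the set {t ≥ 0 : v₀(t) = 0} contains at most one element; (b) the set {t ≥ 0 : |v₀(t)| ≤ δ} is a (possibly empty) interval whose length is at most t_δ = (δ*/c) · 2δ/(δ* − δ); (c) if v₀(t*) ≥ δ for some t* ≥ 0, then v₀(t) ≥ δ for all t ≥ t*. -/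
open MeasureTheory Real Set Filter
open Topology

section AuxPassage


lemma aux_slope_pos_right (u : ℝ → ℝ) {φs s t₀ : ℝ} (hst : s < t₀) (hs0 : 0 ≤ s)
    (hd : HasDerivWithinAt u φs (Set.Ici 0) s) (hφ : 0 < φs) :
    ∃ r ∈ Ioo s t₀, u s < u r := by
  have hsub : Ioo s t₀ ⊆ Set.Ici (0:ℝ) \ {s} :=
    fun r hr => ⟨le_trans hs0 hr.1.le, ne_of_gt hr.1⟩
  have hne : (𝓝[Ioo s t₀] s).NeBot := by
    rw [← mem_closure_iff_nhdsWithin_neBot, closure_Ioo hst.ne]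
    exact ⟨le_refl s, hst.le⟩
  have h1 : Tendsto (slope u s) (𝓝[Ioo s t₀] s) (𝓝 φs) :=
    ((hasDerivWithinAt_iff_tendsto_slope).1 hd).mono_left (nhdsWithin_mono _ hsub)
  have h2 : ∀ᶠ r in 𝓝[Ioo s t₀] s, 0 < slope u s r := h1.eventually_const_lt hφ
  obtain ⟨r, hr0, hrmem⟩ := (h2.and self_mem_nhdsWithin).exists
  refine ⟨r, hrmem, ?_⟩
  rw [slope_def_field] at hr0
  have hrs : 0 < r - s := sub_pos.2 hrmem.1
  nlinarith [mul_pos hr0 hrs, div_mul_cancel₀ (u r - u s) (ne_of_gt hrs)]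

lemma aux_invariant (u φ : ℝ → ℝ) (d : ℝ)
    (hd : ∀ t ∈ Set.Ici (0:ℝ), HasDerivWithinAt u (φ t) (Set.Ici 0) t)
    (hlev : ∀ t, 0 ≤ t → u t = d → 0 < φ t)
    (a : ℝ) (ha : 0 ≤ a) (hua : d ≤ u a) :
    ∀ t, a ≤ t → d ≤ u t := by
  have hcont : ContinuousOn u (Set.Ici 0) := fun t ht => (hd t ht).continuousWithinAt
  intro t₀ hat
  by_contra hcon
  push_neg at hcon
  have hat' : a < t₀ := by
    rcases lt_or_eq_of_le hat with h | h
    · exact h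
    · exact absurd hua (by rw [h]; exact not_le.2 hcon)
  set A : Set ℝ := Icc a t₀ ∩ u ⁻¹' Ici d with hA
  have hclosed : IsClosed A :=
    (hcont.mono (Icc_subset_Ici_self.trans (Ici_subset_Ici.2 ha))).preimage_isClosed_of_isClosed
      isClosed_Icc isClosed_Ici
  have hAne : A.Nonempty := ⟨a, ⟨le_refl a, hat⟩, hua⟩
  have hbdd : BddAbove A := ⟨t₀, fun r hr => hr.1.2⟩
  set s := sSup A with hs
  have hsA : s ∈ A := hclosed.csSup_mem hAne hbdd
  have hs0 : 0 ≤ s := le_trans ha hsA.1.1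
  have hst : s < t₀ := by
    rcases lt_or_eq_of_le hsA.1.2 with h | h
    · exact h
    · exact absurd hsA.2 (by rw [h]; exact not_le.2 hcon)
  have hlt' : ∀ r, s < r → r ≤ t₀ → u r < d := by
    intro r h1 h2
    by_contra h
    push_neg at h
    exact absurd (le_csSup hbdd ⟨⟨le_trans hsA.1.1 h1.le, h2⟩, h⟩) (not_le.2 h1)
  have husd : u s = d := by
    refine le_antisymm ?_ hsA.2
    have hneb : (𝓝[Ioo s t₀] s).NeBot := by
      rw [← mem_closure_iff_nhdsWithin_neBot, closure_Ioo hst.ne]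
      exact ⟨le_refl s, hst.le⟩
    have htend : Tendsto u (𝓝[Ioo s t₀] s) (𝓝 (u s)) :=
      ((hd s hs0).continuousWithinAt).mono_left
        (nhdsWithin_mono _ (fun r hr => le_trans hs0 hr.1.le))
    exact le_of_tendsto htend (eventually_mem_nhdsWithin.mono
      (fun r hr => (hlt' r hr.1 hr.2.le).le))
  obtain ⟨r, hrmem, hur⟩ := aux_slope_pos_right u hst hs0 (hd s hs0) (hlev s hs0 husd)
  have := hlt' r hrmem.1 hrmem.2.le
  rw [husd] at hur
  linarith

lemma aux_sigma_lip (σ : ℝ → ℝ) (hσ : Differentiable ℝ σ)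
    (hpos : ∀ x, 0 < deriv σ x) (hmax : ∀ x, deriv σ x ≤ deriv σ 0) :
    ∀ x y, |σ x - σ y| ≤ deriv σ 0 * |x - y| := by
  intro x y
  have hK : (0:ℝ) ≤ deriv σ 0 := (hpos 0).le
  have hlip : LipschitzWith ⟨deriv σ 0, hK⟩ σ := by
    apply lipschitzWith_of_nnnorm_deriv_le hσ
    intro z
    show (‖deriv σ z‖₊ : ℝ) ≤ deriv σ 0
    simp only [coe_nnnorm, Real.norm_eq_abs, NNReal.coe_mk]
    rw [abs_of_pos (hpos z)]
    exact hmax z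
  have := hlip.dist_le_mul x y
  rw [Real.dist_eq, Real.dist_eq] at this
  exact this

lemma aux_sigma_bound (σ : ℝ → ℝ) (hmono : Monotone σ)
    (hbot : Tendsto σ atBot (nhds (-1))) (htop : Tendsto σ atTop (nhds 1)) :
    ∀ x, |σ x| ≤ 1 := by
  intro x
  rw [abs_le]
  constructor
  · exact le_of_tendsto hbot (eventually_le_atBot x |>.mono fun y hy => hmono hy)
  · exact ge_of_tendsto htop (eventually_ge_atTop x |>.mono fun y hy => hmono hy)

lemma aux_theta_zero (σ : ℝ → ℝ) (hσ : Continuous σ) (hodd : ∀ x, σ (-x) = -σ x)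
    (a b : ℝ) :
    ∫ θ in Ico (-(π/2)) (π/2), σ (a * Real.cos (2*θ) + b * Real.sin (2*θ)) = 0 := by
  set F : ℝ → ℝ := fun θ => σ (a * Real.cos (2*θ) + b * Real.sin (2*θ)) with hF
  have hFc : Continuous F := by fun_prop
  have hkey : ∀ θ, F (θ - π/2) = -F θ := by
    intro θ
    simp only [hF]
    have h2 : 2 * (θ - π/2) = 2*θ - π := by ring
    rw [h2, Real.cos_sub_pi, Real.sin_sub_pi,
      show a * -Real.cos (2*θ) + b * -Real.sin (2*θ)
        = -(a * Real.cos (2*θ) + b * Real.sin (2*θ)) by ring, hodd]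
  have hIco : ∫ θ in Ico (-(π/2)) (π/2), F θ = ∫ θ in (-(π/2))..(π/2), F θ := by
    rw [intervalIntegral.integral_of_le (by linarith [pi_pos]),
      integral_Ico_eq_integral_Ioo, integral_Ioc_eq_integral_Ioo]
  have hsplit : (∫ θ in (-(π/2))..(0:ℝ), F θ) + ∫ θ in (0:ℝ)..(π/2), F θ
      = ∫ θ in (-(π/2))..(π/2), F θ :=
    intervalIntegral.integral_add_adjacent_intervals
      (hFc.intervalIntegrable (-(π/2)) 0 (μ := volume)) (hFc.intervalIntegrable 0 (π/2) (μ := volume))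
  have hcomp : ∫ θ in (0:ℝ)..(π/2), F (θ - π/2) = ∫ θ in (-(π/2))..(0:ℝ), F θ := by
    have := intervalIntegral.integral_comp_sub_right (a := (0:ℝ)) (b := π/2) F (π/2)
    simpa using this
  have hneg : ∫ θ in (0:ℝ)..(π/2), F (θ - π/2) = -∫ θ in (0:ℝ)..(π/2), F θ := by
    rw [← intervalIntegral.integral_neg]
    exact intervalIntegral.integral_congr fun θ _ => hkey θ
  rw [hIco]
  linarith [hsplit, hcomp, hneg]

end AuxPassage

lemma aux_key_bound (σ P : ℝ → ℝ) (hσc : Continuous σ) (hσb : ∀ x, |σ x| ≤ 1)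
    (hodd : ∀ x, σ (-x) = -σ x) (K : ℝ)
    (hlip : ∀ x y, |σ x - σ y| ≤ K * |x - y|)
    (hP0 : ∀ r, 0 ≤ P r) (hPi : IntegrableOn P (Set.Ici 0))
    (hPint : ∫ r in Set.Ici (0:ℝ), P r = 1) (w : Fin 3 → ℝ) :
    |∫ x in (Set.Ici (0:ℝ)) ×ˢ (Set.Ico (-(π/2)) (π/2)),
        σ (Vact w x.1 x.2) * P x.1 / π| ≤ K * |w 0| := by
  set μ1 := (volume : Measure ℝ).restrict (Set.Ici (0:ℝ)) with hμ1
  set μ2 := (volume : Measure ℝ).restrict (Set.Ico (-(π/2)) (π/2)) with hμ2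
  have hμ : (volume : Measure (ℝ×ℝ)).restrict
      ((Set.Ici (0:ℝ)) ×ˢ (Set.Ico (-(π/2)) (π/2))) = μ1.prod μ2 := by
    rw [Measure.volume_eq_prod, Measure.prod_restrict]
  have hPm : AEStronglyMeasurable (fun x : ℝ×ℝ => P x.1) (μ1.prod μ2) :=
    (hPi.aemeasurable.comp_fst).aestronglyMeasurable
  have hQi : Integrable (fun x : ℝ×ℝ => P x.1 / π) (μ1.prod μ2) := by
    have h1 : Integrable (fun r : ℝ => P r / π) μ1 := hPi.div_const π
    have h2 : Integrable (fun _ : ℝ => (1:ℝ)) μ2 :=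
      integrableOn_const measure_Ico_lt_top.ne
    simpa using h1.mul_prod h2
  have hint : ∀ G : ℝ×ℝ → ℝ, Continuous G → (∀ x, |G x| ≤ 1) →
      Integrable (fun x : ℝ×ℝ => G x * P x.1 / π) (μ1.prod μ2) := by
    intro G hGc hGb
    have hm : AEStronglyMeasurable (fun x : ℝ×ℝ => G x * P x.1 / π) (μ1.prod μ2) := by
      simp only [div_eq_mul_inv]
      exact (hGc.aestronglyMeasurable.mul hPm).mul_const _
    refine hQi.mono' hm (ae_of_all _ ?_)
    intro x
    beta_reduce
    rw [Real.norm_eq_abs, abs_div, abs_mul, abs_of_pos pi_pos, abs_of_nonneg (hP0 x.1)]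
    gcongr
    exact mul_le_of_le_one_left (hP0 x.1) (hGb x)
  have hc1 : Continuous (fun x : ℝ×ℝ => σ (Vact w x.1 x.2)) := by
    unfold Vact; fun_prop
  have hc2 : Continuous (fun x : ℝ×ℝ =>
      σ (x.1 * w 1 * Real.cos (2*x.2) + x.1 * w 2 * Real.sin (2*x.2))) := by fun_prop
  have hA_int : Integrable
      (fun x : ℝ×ℝ => σ (Vact w x.1 x.2) * P x.1 / π) (μ1.prod μ2) :=
    hint _ hc1 (fun x => hσb _)
  have hB_int : Integrable (fun x : ℝ×ℝ =>
      σ (x.1 * w 1 * Real.cos (2*x.2) + x.1 * w 2 * Real.sin (2*x.2)) * P x.1 / π)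
      (μ1.prod μ2) := hint _ hc2 (fun x => hσb _)
  have hQ1 : ∫ x : ℝ×ℝ, P x.1 / π ∂(μ1.prod μ2) = 1 := by
    have hp := integral_prod_mul (μ := μ1) (ν := μ2) (fun r => P r / π) (fun _ => (1:ℝ))
    simp only [mul_one] at hp
    rw [hp]
    have h2 : ∫ _ : ℝ, (1:ℝ) ∂μ2 = π := by
      rw [integral_const, smul_eq_mul, mul_one, hμ2, measureReal_def, Measure.restrict_apply_univ,
        Real.volume_Ico, show π/2 - -(π/2) = π by ring, ENNReal.toReal_ofReal pi_pos.le]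
    rw [h2, integral_div, hPint]
    field_simp
  have hB0 : ∫ x : ℝ×ℝ, σ (x.1 * w 1 * Real.cos (2*x.2) + x.1 * w 2 * Real.sin (2*x.2))
      * P x.1 / π ∂(μ1.prod μ2) = 0 := by
    rw [integral_prod _ hB_int]
    have hinner : ∀ r : ℝ,
        ∫ θ, σ (r * w 1 * Real.cos (2*θ) + r * w 2 * Real.sin (2*θ)) * P r / π ∂μ2 = 0 := by
      intro r
      rw [integral_div, integral_mul_const]
      rw [hμ2]
      rw [aux_theta_zero σ hσc hodd (r * w 1) (r * w 2)]
      simp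
    simp only [hinner, integral_zero]
  rw [hμ]
  have hs : ∫ x : ℝ×ℝ, σ (Vact w x.1 x.2) * P x.1 / π ∂(μ1.prod μ2)
      = ∫ x : ℝ×ℝ, (σ (Vact w x.1 x.2) * P x.1 / π -
          σ (x.1 * w 1 * Real.cos (2*x.2) + x.1 * w 2 * Real.sin (2*x.2)) * P x.1 / π)
        ∂(μ1.prod μ2) := by
    rw [integral_sub hA_int hB_int, hB0, sub_zero]
  rw [← Real.norm_eq_abs, hs]
  have hbound := MeasureTheory.norm_integral_le_of_norm_le
    (f := fun x : ℝ×ℝ => σ (Vact w x.1 x.2) * P x.1 / π -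
          σ (x.1 * w 1 * Real.cos (2*x.2) + x.1 * w 2 * Real.sin (2*x.2)) * P x.1 / π)
    (g := fun x : ℝ×ℝ => (K * |w 0|) * (P x.1 / π))
    (hQi.const_mul (K * |w 0|)) (ae_of_all _ ?_)
  · refine hbound.trans ?_
    rw [integral_const_mul, hQ1, mul_one]
  · intro x
    beta_reduce
    have hV : Vact w x.1 x.2 -
        (x.1 * w 1 * Real.cos (2*x.2) + x.1 * w 2 * Real.sin (2*x.2)) = w 0 := by
      unfold Vact; ring
    have h1 : |σ (Vact w x.1 x.2) -
        σ (x.1 * w 1 * Real.cos (2*x.2) + x.1 * w 2 * Real.sin (2*x.2))| ≤ K * |w 0| := by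
      calc _ ≤ K * |Vact w x.1 x.2 -
          (x.1 * w 1 * Real.cos (2*x.2) + x.1 * w 2 * Real.sin (2*x.2))| := hlip _ _
        _ = K * |w 0| := by rw [hV]
    rw [Real.norm_eq_abs,
      show σ (Vact w x.1 x.2) * P x.1 / π -
          σ (x.1 * w 1 * Real.cos (2*x.2) + x.1 * w 2 * Real.sin (2*x.2)) * P x.1 / π
        = (σ (Vact w x.1 x.2) -
            σ (x.1 * w 1 * Real.cos (2*x.2) + x.1 * w 2 * Real.sin (2*x.2))) * (P x.1 / π)
        by ring]
    rw [abs_mul, abs_div, abs_of_nonneg (hP0 x.1), abs_of_pos pi_pos]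
    have hPp : 0 ≤ P x.1 / π := div_nonneg (hP0 x.1) pi_pos.le
    exact mul_le_mul_of_nonneg_right h1 hPp

/-- with `I₀(t) ≥ c > 0`, `δ* = c/(1+|J₀|σ'(0))` and `0 < δ < δ*`:
(a) `v₀` vanishes at most once on `[0,∞)`; (b) `{t ≥ 0 : |v₀(t)| ≤ δ}` is an
interval of length at most `t_δ = (δ*/c)·2δ/(δ*−δ)`; (c) if `v₀(t*) ≥ δ` then
`v₀(t) ≥ δ` for all `t ≥ t*`. -/
theorem passage_through_singularity
    (σ P : ℝ → ℝ) (J0 J1 : ℝ) (hJ0 : J0 ≠ 0) (hJ1 : 0 < J1)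
    (I : ℝ → ℝ × ℝ × ℝ) (hI : Continuous I)
    (c : ℝ) (hc : 0 < c) (hI0 : ∀ t : ℝ, 0 ≤ t → c ≤ (I t).1)
    (hσ : ContDiff ℝ (⊤ : ℕ∞) σ)
    (hodd : ∀ x, σ (-x) = -σ x)
    (hpos : ∀ x, 0 < deriv σ x)
    (hcc : ∀ x, x * iteratedDeriv 2 σ x ≤ 0)
    (hσ0 : σ 0 = 0)
    (hbot : Tendsto σ atBot (nhds (-1)))
    (htop : Tendsto σ atTop (nhds 1))
    (hmax : ∀ x, deriv σ x ≤ deriv σ 0)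
    (hP0 : ∀ r, 0 ≤ P r)
    (hPsupp : HasCompactSupport P)
    (hPint : ∫ r in Set.Ici (0:ℝ), P r = 1)
    (v : ℝ → Fin 3 → ℝ) (hv : IsSol σ P J0 J1 I v)
    (δ : ℝ) (hδ : 0 < δ) (hδlt : δ < c / (1 + |J0| * deriv σ 0)) :
    ({t : ℝ | 0 ≤ t ∧ v t 0 = 0}).Subsingleton ∧
    (Set.OrdConnected {t : ℝ | 0 ≤ t ∧ |v t 0| ≤ δ} ∧
      ∀ s ∈ {t : ℝ | 0 ≤ t ∧ |v t 0| ≤ δ}, ∀ u ∈ {t : ℝ | 0 ≤ t ∧ |v t 0| ≤ δ},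
        u - s ≤ (c / (1 + |J0| * deriv σ 0)) / c *
          (2 * δ / (c / (1 + |J0| * deriv σ 0) - δ))) ∧
    (∀ tstar : ℝ, 0 ≤ tstar → δ ≤ v tstar 0 → ∀ t : ℝ, tstar ≤ t → δ ≤ v t 0) := by
  have hKpos : 0 < deriv σ 0 := hpos 0
  set K := deriv σ 0 with hKdef
  set M := 1 + |J0| * K with hMdef
  have hM : 0 < M := by
    rw [hMdef]
    have : 0 ≤ |J0| * K := mul_nonneg (abs_nonneg _) hKpos.le
    linarith
  have hMne : M ≠ 0 := ne_of_gt hM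
  have hδs : 0 < c / M := div_pos hc hM
  have hcM : c = M * (c / M) := by field_simp
  -- integrability of P
  have hPi : IntegrableOn P (Set.Ici 0) := by
    by_contra h
    rw [MeasureTheory.integral_undef h] at hPint
    norm_num at hPint
  have hσb : ∀ x, |σ x| ≤ 1 :=
    aux_sigma_bound σ (strictMono_of_deriv_pos hpos).monotone hbot htop
  have hlip : ∀ x y, |σ x - σ y| ≤ K * |x - y| :=
    aux_sigma_lip σ (hσ.differentiable (by simp)) hpos hmax
  have hkey : ∀ w : Fin 3 → ℝ,
      |∫ x in (Set.Ici (0:ℝ)) ×ˢ (Set.Ico (-(π/2)) (π/2)),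
        σ (Vact w x.1 x.2) * P x.1 / π| ≤ K * |w 0| :=
    aux_key_bound σ P hσ.continuous hσb hodd K hlip hP0 hPi hPint
  set u : ℝ → ℝ := fun t => v t 0 with hudef
  set φ : ℝ → ℝ := fun t => fvec σ P J0 J1 (I t) (v t) 0 with hφdef
  have hd : ∀ t ∈ Set.Ici (0:ℝ), HasDerivWithinAt u (φ t) (Set.Ici 0) t :=
    fun t ht => (hasDerivWithinAt_pi.1 (hv.2 t ht)) 0
  have hφeq : ∀ t, φ t = -(v t 0) + J0 * (∫ x in (Set.Ici (0:ℝ)) ×ˢ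
      (Set.Ico (-(π/2)) (π/2)), σ (Vact (v t) x.1 x.2) * P x.1 / π) + (I t).1 := by
    intro t
    rw [hφdef]
    simp [fvec]
  have hφge : ∀ t, 0 ≤ t → c - M * |u t| ≤ φ t := by
    intro t ht
    have h1 := hkey (v t)
    have h2 : -(|J0| * (K * |u t|)) ≤ J0 * (∫ x in (Set.Ici (0:ℝ)) ×ˢ
        (Set.Ico (-(π/2)) (π/2)), σ (Vact (v t) x.1 x.2) * P x.1 / π) := by
      have ha := neg_abs_le (J0 * (∫ x in (Set.Ici (0:ℝ)) ×ˢ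
        (Set.Ico (-(π/2)) (π/2)), σ (Vact (v t) x.1 x.2) * P x.1 / π))
      have hb : |J0 * (∫ x in (Set.Ici (0:ℝ)) ×ˢ
          (Set.Ico (-(π/2)) (π/2)), σ (Vact (v t) x.1 x.2) * P x.1 / π)|
          ≤ |J0| * (K * |u t|) := by
        rw [abs_mul]
        exact mul_le_mul_of_nonneg_left h1 (abs_nonneg _)
      linarith
    have h3 : c ≤ (I t).1 := hI0 t ht
    have h4 : -|u t| ≤ -(v t 0) := neg_le_neg (le_abs_self _)
    have hexp : M * |u t| = |u t| + |J0| * (K * |u t|) := by rw [hMdef]; ring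
    rw [hφeq t]
    linarith
  have hlev : ∀ e, |e| < c / M → ∀ t, 0 ≤ t → u t = e → 0 < φ t := by
    intro e he t ht hut
    have h1 := hφge t ht
    rw [hut] at h1
    have h2 : M * |e| < M * (c / M) := mul_lt_mul_of_pos_left he hM
    rw [← hcM] at h2
    linarith
  have hδabs : |δ| < c / M := by rw [abs_of_pos hδ]; exact hδlt
  have hstrict : ∀ e, |e| < c / M → ∀ a, 0 ≤ a → e < u a → ∀ t, a ≤ t → e < u t := by
    intro e he a ha hua t hat
    have heb := abs_lt.1 he
    have h1 : e < min (u a) ((e + c/M)/2) := lt_min hua (by linarith)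
    have h2 : |min (u a) ((e + c/M)/2)| < c / M := by
      rw [abs_lt]
      constructor
      · linarith
      · calc min (u a) ((e + c/M)/2) ≤ (e + c/M)/2 := min_le_right _ _
          _ < c/M := by linarith
    have h3 := aux_invariant u φ _ hd (hlev _ h2) a ha (min_le_left _ _) t hat
    linarith
  -- part (a)
  have parta : ({t : ℝ | 0 ≤ t ∧ v t 0 = 0}).Subsingleton := by
    have hkey0 : ∀ s t : ℝ, 0 ≤ s → v s 0 = 0 → 0 ≤ t → v t 0 = 0 → s < t → False := by
      intro s t hs0 hus ht0 hut hst
      have h0abs : |(0:ℝ)| < c / M := by simpa using hδs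
      have hφs : 0 < φ s := hlev 0 h0abs s hs0 hus
      obtain ⟨r, hr, hur⟩ := aux_slope_pos_right u hst hs0 (hd s hs0) hφs
      have hus' : u s = 0 := hus
      rw [hus'] at hur
      have hr0 : 0 ≤ r := le_trans hs0 hr.1.le
      have := hstrict 0 h0abs r hr0 hur t hr.2.le
      have hut' : u t = 0 := hut
      rw [hut'] at this
      exact lt_irrefl 0 this
    intro x hx y hy
    simp only [mem_setOf_eq] at hx hy
    by_contra hxy
    rcases lt_or_gt_of_ne hxy with h | h
    · exact hkey0 x y hx.1 hx.2 hy.1 hy.2 h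
    · exact hkey0 y x hy.1 hy.2 hx.1 hx.2 h
  -- part (b) ord connected
  have hord : Set.OrdConnected {t : ℝ | 0 ≤ t ∧ |v t 0| ≤ δ} := by
    refine ⟨fun s hs t ht r hr => ?_⟩
    simp only [mem_setOf_eq] at hs ht ⊢
    have hr0 : 0 ≤ r := le_trans hs.1 hr.1
    refine ⟨hr0, abs_le.2 ⟨?_, ?_⟩⟩
    · by_contra h
      push_neg at h
      have hnegd : |(-δ)| < c / M := by rwa [abs_neg, abs_of_pos hδ]
      have h1 : -δ ≤ u s := (abs_le.1 hs.2).1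
      have h2 : -δ ≤ u r := aux_invariant u φ (-δ) hd (hlev _ hnegd) s hs.1 h1 r hr.1
      have : u r < -δ := h
      linarith
    · by_contra h
      push_neg at h
      have h2 : δ < u t := hstrict δ hδabs r hr0 h t hr.2
      have h3 : u t ≤ δ := (abs_le.1 ht.2).2
      linarith
  refine ⟨parta, ⟨hord, ?_⟩, ?_⟩
  · -- length bound
    intro s hs t ht
    simp only [mem_setOf_eq] at hs ht
    have hρ : 0 < c - M * δ := by
      have h2 : M * δ < M * (c / M) := mul_lt_mul_of_pos_left hδlt hM
      rw [← hcM] at h2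
      linarith
    have hrhs : c / M / c * (2 * δ / (c / M - δ)) = 2 * δ / (c - M * δ) := by
      rw [show c / M - δ = (c - M * δ) / M by field_simp]
      field_simp
    rcases le_or_gt t s with hst | hst
    · have hnn : 0 ≤ 2 * δ / (c - M * δ) := by positivity
      rw [hrhs]
      linarith
    · have hsubIcc : Icc s t ⊆ {t : ℝ | 0 ≤ t ∧ |v t 0| ≤ δ} :=
        hord.out (by exact hs) (by exact ht)
      have hcont : ContinuousOn u (Icc s t) := fun x hx =>
        ((hd x (le_trans hs.1 hx.1)).continuousWithinAt).mono
          (fun y hy => le_trans hs.1 hy.1)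
      have hderiv : ∀ x ∈ interior (Icc s t), HasDerivAt u (φ x) x := by
        intro x hx
        rw [interior_Icc] at hx
        have hx0 : 0 < x := lt_of_le_of_lt hs.1 hx.1
        exact (hd x hx0.le).hasDerivAt (Ici_mem_nhds hx0)
      have hdiff : DifferentiableOn ℝ u (interior (Icc s t)) := fun x hx =>
        (hderiv x hx).differentiableAt.differentiableWithinAt
      have hge : ∀ x ∈ interior (Icc s t), c - M * δ ≤ deriv u x := by
        intro x hx
        rw [(hderiv x hx).deriv]
        have hxI : x ∈ Icc s t := by
          rw [interior_Icc] at hx; exact Ioo_subset_Icc_self hx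
        have hxm := hsubIcc hxI
        simp only [mem_setOf_eq] at hxm
        have h1 := hφge x hxm.1
        have h2 : M * |u x| ≤ M * δ := mul_le_mul_of_nonneg_left hxm.2 hM.le
        linarith
      have hmvt := (convex_Icc s t).mul_sub_le_image_sub_of_le_deriv hcont hdiff hge
        s (left_mem_Icc.2 hst.le) t (right_mem_Icc.2 hst.le) hst.le
      have hub : u t ≤ δ := (abs_le.1 ht.2).2
      have hlb : -δ ≤ u s := (abs_le.1 hs.2).1
      have h2δ : (c - M * δ) * (t - s) ≤ 2 * δ := by linarith
      rw [hrhs, le_div_iff₀ hρ]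
      linarith [mul_comm (c - M * δ) (t - s)]
  · -- part (c)
    intro tstar h0 hstar t htt
    exact aux_invariant u φ δ hd (hlev δ hδabs) tstar h0 hstar t htt
end
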